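/- arXiv:2508.03938 — 4 statements merged into one kernel-verified Lean document; each statement's English description precedes it below -/
import Mathlib

section
/- For w = 2^c, any axis-parallel rectangle [α,β] × [γ,η] ⊆ [0,w] × [0,w] with integer corners that contains no point of the Van der Corput set C_w = {(q, f_w(q)) : 0 ≤ q ≤ w-1} has area strictly less than 4w. -/
/-- Bit-reversing function. -/
def bitRev (c z : ℕ) : ℕ := ∑ i ∈ Finset.range c, (z / 2 ^ i % 2) * 2 ^ (c - 1 - i)

lemma bitRev_zero (z : ℕ) : bitRev 0 z = 0 := by simp [bitRev]

lemma bitRev_succ_left (j z : ℕ) :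
    bitRev (j+1) z = z % 2 * 2 ^ j + bitRev j (z / 2) := by
  rw [bitRev, Finset.sum_range_succ']
  have h0 : z / 2 ^ 0 % 2 * 2 ^ (j + 1 - 1 - 0) = z % 2 * 2 ^ j := by
    norm_num
  rw [h0, add_comm]
  congr 1
  apply Finset.sum_congr rfl
  intro i hi
  rw [Finset.mem_range] at hi
  have h1 : z / 2 ^ (i+1) = z / 2 / 2 ^ i := by
    rw [Nat.div_div_eq_div_mul, pow_succ']
  have h2 : j + 1 - 1 - (i+1) = j - 1 - i := by omega
  rw [h1, h2]

lemma mod_pow_div_mod {i j z : ℕ} (h : i < j) :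
    z % 2 ^ j / 2 ^ i % 2 = z / 2 ^ i % 2 := by
  have hj : 2 ^ j = 2 ^ i * 2 ^ (j - i) := by rw [← pow_add]; congr 1; omega
  rw [hj, Nat.mod_mul_right_div_self]
  exact Nat.mod_mod_of_dvd _ (dvd_pow_self 2 (by omega))

lemma bitRev_succ_right (j z : ℕ) :
    bitRev (j+1) z = 2 * bitRev j (z % 2 ^ j) + z / 2 ^ j % 2 := by
  rw [bitRev, Finset.sum_range_succ]
  have hlast : z / 2 ^ j % 2 * 2 ^ (j + 1 - 1 - j) = z / 2 ^ j % 2 := by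
    simp
  rw [hlast]
  congr 1
  rw [bitRev, Finset.mul_sum]
  apply Finset.sum_congr rfl
  intro i hi
  rw [Finset.mem_range] at hi
  rw [mod_pow_div_mod hi]
  have : j + 1 - 1 - i = (j - 1 - i) + 1 := by omega
  rw [this, pow_succ]
  ring

lemma bitRev_lt (j z : ℕ) : bitRev j z < 2 ^ j := by
  induction j generalizing z with
  | zero => simp [bitRev_zero]
  | succ j ih =>
    rw [bitRev_succ_left]
    have h1 : z % 2 ≤ 1 := by omega
    have h2 := ih (z / 2)
    have h3 : z % 2 * 2 ^ j ≤ 2 ^ j := by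
      calc z % 2 * 2 ^ j ≤ 1 * 2 ^ j := Nat.mul_le_mul_right _ h1
      _ = 2 ^ j := one_mul _
    have hp : 2 ^ (j+1) = 2 ^ j + 2 ^ j := by rw [pow_succ]; ring
    omega

lemma bitRev_bitRev {j z : ℕ} (h : z < 2 ^ j) : bitRev j (bitRev j z) = z := by
  induction j generalizing z with
  | zero => interval_cases z; simp [bitRev_zero]
  | succ j ih =>
    have hb : bitRev j (z / 2) < 2 ^ j := bitRev_lt j (z / 2)
    have hs : bitRev (j+1) z = z % 2 * 2 ^ j + bitRev j (z / 2) :=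
      bitRev_succ_left j z
    rw [hs, bitRev_succ_right]
    have hmod : (z % 2 * 2 ^ j + bitRev j (z / 2)) % 2 ^ j = bitRev j (z / 2) := by
      rw [mul_comm, Nat.mul_add_mod]
      exact Nat.mod_eq_of_lt hb
    have hdiv : (z % 2 * 2 ^ j + bitRev j (z / 2)) / 2 ^ j = z % 2 := by
      rw [mul_comm, Nat.mul_add_div (by positivity), Nat.div_eq_of_lt hb, add_zero]
    rw [hmod, hdiv]
    have hz2 : z / 2 < 2 ^ j := by
      have hp : 2 ^ (j+1) = 2 * 2 ^ j := by rw [pow_succ]; ring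
      omega
    rw [ih hz2]
    omega

lemma bitRev_split (c : ℕ) : ∀ j ≤ c, ∀ q : ℕ,
    bitRev c q = bitRev j (q % 2 ^ j) * 2 ^ (c - j) + bitRev (c - j) (q / 2 ^ j) := by
  intro j
  induction j with
  | zero => intro _ q; simp [bitRev_zero]
  | succ j ih =>
    intro hjc q
    have hj : j ≤ c := by omega
    rw [ih hj q]
    have hcj : c - j = (c - (j+1)) + 1 := by omega
    rw [hcj, bitRev_succ_left, bitRev_succ_right]
    have e1 : q % 2 ^ (j+1) % 2 ^ j = q % 2 ^ j :=
      Nat.mod_mod_of_dvd _ (pow_dvd_pow 2 (by omega))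
    have e2 : q % 2 ^ (j+1) / 2 ^ j % 2 = q / 2 ^ j % 2 :=
      mod_pow_div_mod (by omega)
    have e3 : q / 2 ^ j / 2 = q / 2 ^ (j+1) := by
      rw [Nat.div_div_eq_div_mul, ← pow_succ]
    rw [e1, e2, e3, pow_succ]
    ring

/-- Any axis-parallel integer rectangle `[α,β] × [γ,η] ⊆ [0,w] × [0,w]` (with `w = 2^c`)
containing no point of the Van der Corput set `C_w = {(q, f_w(q)) : 0 ≤ q ≤ w-1}`
has area strictly less than `4w`. -/
theorem vdc_empty_rectangle_area (c α β γ η : ℕ) (hc : 0 < c)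
    (hβ : β ≤ 2 ^ c) (hη : η ≤ 2 ^ c)
    (hempty : ∀ q, q < 2 ^ c →
      ¬(α ≤ q ∧ q < β ∧ γ ≤ bitRev c q ∧ bitRev c q < η)) :
    (β - α) * (η - γ) < 4 * 2 ^ c := by
  have hwpos : 0 < 2 ^ c := by positivity
  by_cases hαβ : α < β
  swap
  · have h0 : β - α = 0 := by omega
    rw [h0, zero_mul]; positivity
  by_cases hγη : γ < η
  swap
  · have h0 : η - γ = 0 := by omega
    rw [h0, mul_zero]; positivity
  obtain ⟨j, h1, h2, hjc⟩ : ∃ j, 2 ^ j ≤ β - α ∧ β - α < 2 ^ (j + 1) ∧ j ≤ c := by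
    refine ⟨Nat.log 2 (β - α), Nat.pow_log_le_self 2 (by omega),
      Nat.lt_pow_succ_log_self (by norm_num) _, ?_⟩
    have hle : 2 ^ Nat.log 2 (β - α) ≤ 2 ^ c :=
      le_trans (Nat.pow_log_le_self 2 (by omega)) (by omega)
    exact (Nat.pow_le_pow_iff_right (by norm_num)).mp hle
  have hspos : 0 < 2 ^ (c - j) := by positivity
  have hcs : 2 ^ j * 2 ^ (c - j) = 2 ^ c := by rw [← pow_add]; congr 1; omega
  have hclaim : η - γ < 2 * 2 ^ (c - j) := by
    by_contra hcon
    push_neg at hcon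
    obtain ⟨m, hm1, hm2⟩ : ∃ m, γ ≤ m * 2 ^ (c - j) ∧
        m * 2 ^ (c - j) + 2 ^ (c - j) ≤ η := by
      have hdm := Nat.div_add_mod γ (2 ^ (c - j))
      have hlt := Nat.mod_lt γ hspos
      by_cases h0 : γ % 2 ^ (c - j) = 0
      · refine ⟨γ / 2 ^ (c - j), ?_, ?_⟩ <;>
        · have hcm : γ / 2 ^ (c - j) * 2 ^ (c - j) = 2 ^ (c - j) * (γ / 2 ^ (c - j)) :=
            mul_comm _ _
          omega
      · refine ⟨γ / 2 ^ (c - j) + 1, ?_, ?_⟩ <;>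
        · have hcm : (γ / 2 ^ (c - j) + 1) * 2 ^ (c - j) =
              2 ^ (c - j) * (γ / 2 ^ (c - j)) + 2 ^ (c - j) := by ring
          omega
    have hmlt : m < 2 ^ j := by
      have hx : (m + 1) * 2 ^ (c - j) ≤ 2 ^ j * 2 ^ (c - j) := by
        have he : (m + 1) * 2 ^ (c - j) = m * 2 ^ (c - j) + 2 ^ (c - j) := by ring
        omega
      have := Nat.le_of_mul_le_mul_right hx hspos
      omega
    have hrlt : bitRev j m < 2 ^ j := bitRev_lt j m
    have hrev : bitRev j (bitRev j m) = m := bitRev_bitRev hmlt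
    have hA := Nat.div_add_mod α (2 ^ j)
    have hAlt : α % 2 ^ j < 2 ^ j := Nat.mod_lt α (by positivity)
    obtain ⟨q, hq1, hq2, hq3⟩ : ∃ q, α ≤ q ∧ q < α + 2 ^ j ∧ q % 2 ^ j = bitRev j m := by
      by_cases hcase : α % 2 ^ j ≤ bitRev j m
      · refine ⟨2 ^ j * (α / 2 ^ j) + bitRev j m, by omega, by omega, ?_⟩
        rw [Nat.mul_add_mod]
        exact Nat.mod_eq_of_lt hrlt
      · refine ⟨2 ^ j * (α / 2 ^ j) + bitRev j m + 2 ^ j, by omega, by omega, ?_⟩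
        rw [Nat.add_mod_right, Nat.mul_add_mod]
        exact Nat.mod_eq_of_lt hrlt
    have hqβ : q < β := by omega
    have hqc : q < 2 ^ c := by omega
    have hsplit := bitRev_split c j hjc q
    rw [hq3, hrev] at hsplit
    have ht : bitRev (c - j) (q / 2 ^ j) < 2 ^ (c - j) := bitRev_lt _ _
    exact hempty q hqc ⟨hq1, hqβ, by omega, by omega⟩
  have hmul : (β - α) * (η - γ) < 2 ^ (j + 1) * (2 * 2 ^ (c - j)) :=
    Nat.mul_lt_mul_of_lt_of_lt h2 hclaim
  have heq : 2 ^ (j + 1) * (2 * 2 ^ (c - j)) = 4 * 2 ^ c := by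
    rw [← hcs, pow_succ]; ring
  omega
end

section
/- Let w = 2^c and m3 = 3^{⌈c·log_3 2⌉}. The w·m3 shifted scaled Halton–Hammersley sets H_w^{d1,d2}, for d1 ∈ {0,...,w-1} and d2 ∈ {0,...,m3-1}, together cover all w^2·m3 integer points of {0,...,w-1} × {0,...,w-1} × {0,...,m3-1}, and the sets are pairwise disjoint. -/
lemma hh_key (n a y : ℕ) (hn : 0 < n) (hy : y < n) :
    (a + (y + n - a % n) % n) % n = y := by
  have h1 : a % n < n := Nat.mod_lt _ hn
  have h2 : a + (y + n - a % n) % n ≡ a % n + (y + n - a % n) [MOD n] :=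
    (Nat.mod_modEq a n).symm.add (Nat.mod_modEq _ n)
  have h3 : a % n + (y + n - a % n) = y + n := by omega
  rw [h3] at h2
  have h4 : y + n ≡ y [MOD n] := by
    unfold Nat.ModEq; rw [Nat.add_mod_right]
  have h5 := h2.trans h4
  rwa [Nat.ModEq, Nat.mod_eq_of_lt hy] at h5

lemma hh_cancel (n a d d' : ℕ) (hd : d < n) (hd' : d' < n)
    (h : (a + d) % n = (a + d') % n) : d = d' := by
  have h2 : d ≡ d' [MOD n] := Nat.ModEq.add_left_cancel' a h
  rwa [Nat.ModEq, Nat.mod_eq_of_lt hd, Nat.mod_eq_of_lt hd'] at h2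

/-- Scaled base-`p` digit reversal with `e` digits. -/
def baseRev (p e z : ℕ) : ℕ := ∑ i ∈ Finset.range e, (z / p ^ i % p) * p ^ (e - 1 - i)

/-- The shifted scaled Halton–Hammersley set `H_w^{d1,d2}` for `w = 2^c`,
`m3 = 3^⌈c·log₃2⌉`. -/
def HHset (c d1 d2 : ℕ) : Set (ℕ × ℕ × ℕ) :=
  {p | ∃ k < 2 ^ c,
    p = (k, (baseRev 2 c k + d1) % 2 ^ c,
          (baseRev 3 (Nat.clog 3 (2 ^ c)) k + d2) % 3 ^ Nat.clog 3 (2 ^ c))}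

/-- The `w·m3` shifted scaled Halton–Hammersley sets cover all integer points of
`{0,...,w-1} × {0,...,w-1} × {0,...,m3-1}`, and they are pairwise disjoint. -/
theorem shifted_scaled_HH_cover_and_disjoint (c : ℕ) (hc : 0 < c) :
    (∀ x y z : ℕ, x < 2 ^ c → y < 2 ^ c → z < 3 ^ Nat.clog 3 (2 ^ c) →
      ∃ d1 < 2 ^ c, ∃ d2 < 3 ^ Nat.clog 3 (2 ^ c), (x, y, z) ∈ HHset c d1 d2) ∧
    (∀ d1 d2 d1' d2' : ℕ, d1 < 2 ^ c → d1' < 2 ^ c →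
      d2 < 3 ^ Nat.clog 3 (2 ^ c) → d2' < 3 ^ Nat.clog 3 (2 ^ c) →
      (d1, d2) ≠ (d1', d2') → Disjoint (HHset c d1 d2) (HHset c d1' d2')) := by
  have hw : 0 < 2 ^ c := Nat.pow_pos (by norm_num)
  have hm : 0 < 3 ^ Nat.clog 3 (2 ^ c) := Nat.pow_pos (by norm_num)
  constructor
  · intro x y z hx hy hz
    refine ⟨(y + 2 ^ c - baseRev 2 c x % 2 ^ c) % 2 ^ c, Nat.mod_lt _ hw,
      (z + 3 ^ Nat.clog 3 (2 ^ c) - baseRev 3 (Nat.clog 3 (2 ^ c)) x % 3 ^ Nat.clog 3 (2 ^ c))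
        % 3 ^ Nat.clog 3 (2 ^ c), Nat.mod_lt _ hm, x, hx, ?_⟩
    rw [hh_key _ _ _ hw hy, hh_key _ _ _ hm hz]
  · intro d1 d2 d1' d2' h1 h1' h2 h2' hne
    rw [Set.disjoint_left]
    rintro p ⟨k, hk, rfl⟩ ⟨k', hk', heq⟩
    have hk1 : k = k' := congrArg Prod.fst heq
    subst hk1
    have hk2 : (baseRev 2 c k + d1') % 2 ^ c = (baseRev 2 c k + d1) % 2 ^ c :=
      (congrArg (fun q => q.2.1) heq).symm
    have hk3 : (baseRev 3 (Nat.clog 3 (2 ^ c)) k + d2') % 3 ^ Nat.clog 3 (2 ^ c)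
        = (baseRev 3 (Nat.clog 3 (2 ^ c)) k + d2) % 3 ^ Nat.clog 3 (2 ^ c) :=
      (congrArg (fun q => q.2.2) heq).symm
    exact hne (by rw [hh_cancel _ _ _ _ h1' h1 hk2, hh_cancel _ _ _ _ h2' h2 hk3])
end

section
/- For all integers d ≥ 1, p ≥ 1, and 1 ≤ i ≤ p, the inequality ((2^i + 1)d + d - 1)·((2^{p+1-i} + 1)d + d - 1) ≤ (4d - 1)·((2^p + 1)d + d - 1) holds. -/
/-- For positive integers `d, p` and `1 ≤ i ≤ p`,
`((2^i+1)d + d - 1)((2^{p+1-i}+1)d + d - 1) ≤ (4d-1)((2^p+1)d + d - 1)`. -/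
theorem product_inequality (d p i : ℕ) (hd : 1 ≤ d) (hp : 1 ≤ p) (hi : 1 ≤ i)
    (hip : i ≤ p) :
    ((2 ^ i + 1) * d + d - 1) * ((2 ^ (p + 1 - i) + 1) * d + d - 1) ≤
      (4 * d - 1) * ((2 ^ p + 1) * d + d - 1) := by
  have h2i : 2 ≤ 2 ^ i := by
    calc 2 = 2 ^ 1 := rfl
    _ ≤ 2 ^ i := Nat.pow_le_pow_right (by norm_num) hi
  have h2j : 2 ≤ 2 ^ (p + 1 - i) := by
    calc 2 = 2 ^ 1 := rfl
    _ ≤ 2 ^ (p + 1 - i) := Nat.pow_le_pow_right (by norm_num) (by omega)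
  have hmul : 2 ^ i * 2 ^ (p + 1 - i) = 2 * 2 ^ p := by
    rw [← pow_add]
    have : i + (p + 1 - i) = p + 1 := by omega
    rw [this, pow_succ]; ring
  have hsum : 2 ^ i + 2 ^ (p + 1 - i) ≤ 2 ^ p + 2 := by nlinarith
  have h1 : 1 ≤ (2 ^ i + 1) * d + d := by nlinarith
  have h2 : 1 ≤ (2 ^ (p + 1 - i) + 1) * d + d := by nlinarith
  have h3 : 1 ≤ (2 ^ p + 1) * d + d := by nlinarith
  have h4 : 1 ≤ 4 * d := by omega
  zify [h1, h2, h3, h4]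
  have hd' : (1 : ℤ) ≤ (d : ℤ) := by exact_mod_cast hd
  have hsum' : (2 : ℤ) ^ i + 2 ^ (p + 1 - i) ≤ 2 ^ p + 2 := by exact_mod_cast hsum
  have hmul' : (2 : ℤ) ^ i * 2 ^ (p + 1 - i) = 2 * 2 ^ p := by exact_mod_cast hmul
  have hmul2 : (2:ℤ) ^ i * 2 ^ (p + 1 - i) * ((d:ℤ) * d) = 2 * 2 ^ p * ((d:ℤ) * d) := by
    rw [hmul']
  nlinarith [mul_le_mul_of_nonneg_left hsum' (by nlinarith : (0:ℤ) ≤ (d:ℤ) * (2 * d - 1)), hmul2]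
end

section
/- Any rectangle of dimensions a × b with a·b ≥ (4d-1)·((m+1)d + d - 1) and min(a,b) ≥ 3d - 1, where m = 2^p for a positive integer p, contains an axis-aligned sub-rectangle of dimensions ((x+1)d) × ((y+1)d) for some positive integers x, y with x·y = m. -/
set_option maxHeartbeats 1000000


/-- Any `a × b` rectangle with `a·b ≥ (4d-1)((m+1)d + d - 1)` and `min(a,b) ≥ 3d-1`,
where `m = 2^p`, contains a `((x+1)d) × ((y+1)d)` sub-rectangle for some positive
integers `x, y` with `x·y = m`. -/
theorem legal_fragment_contains_unit_grid (d p a b : ℕ) (hd : 0 < d) (hp : 0 < p)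
    (hab : (4 * d - 1) * ((2 ^ p + 1) * d + d - 1) ≤ a * b)
    (ha : 3 * d - 1 ≤ a) (hb : 3 * d - 1 ≤ b) :
    ∃ x y : ℕ, 0 < x ∧ 0 < y ∧ x * y = 2 ^ p ∧
      (((x + 1) * d ≤ a ∧ (y + 1) * d ≤ b) ∨ ((x + 1) * d ≤ b ∧ (y + 1) * d ≤ a)) := by
  have hP0 : (2 ^ 0 + 1) * d ≤ a := by simp only [pow_zero]; omega
  set k := Nat.findGreatest (fun k => (2 ^ k + 1) * d ≤ a) p with hk
  have hkp : k ≤ p := Nat.findGreatest_le p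
  have hkspec : (2 ^ k + 1) * d ≤ a :=
    Nat.findGreatest_spec (P := fun k => (2 ^ k + 1) * d ≤ a) (Nat.zero_le p) hP0
  rcases eq_or_lt_of_le hkp with hkeq | hklt
  · -- k = p : take x = 2^p, y = 1
    exact ⟨2 ^ p, 1, Nat.two_pow_pos p, one_pos, mul_one _,
      Or.inl ⟨hkeq ▸ hkspec, by omega⟩⟩
  · -- k < p : take x = 2^k, y = 2^(p-k)
    have hmax : ¬ (2 ^ (k + 1) + 1) * d ≤ a :=
      Nat.findGreatest_is_greatest (P := fun k => (2 ^ k + 1) * d ≤ a) (n := p) (by omega) (by omega)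
    simp only [not_le] at hmax
    refine ⟨2 ^ k, 2 ^ (p - k), Nat.two_pow_pos _,
      Nat.two_pow_pos _, by rw [← pow_add]; congr 1; omega, ?_⟩
    left
    refine ⟨hkspec, ?_⟩
    obtain ⟨s, hs⟩ : ∃ s, 2 ^ k = s := ⟨_, rfl⟩
    obtain ⟨t, ht⟩ : ∃ t, 2 ^ (p - k) = t := ⟨_, rfl⟩
    have hst : s * t = 2 ^ p := by rw [← hs, ← ht, ← pow_add]; congr 1; omega
    have hs1 : 1 ≤ s := hs ▸ Nat.one_le_two_pow
    have ht2 : 2 ≤ t := by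
      rw [← ht]
      calc 2 = 2 ^ 1 := rfl
      _ ≤ 2 ^ (p - k) := Nat.pow_le_pow_right (by norm_num) (by omega)
    have ha' : a + 1 ≤ (2 * s + 1) * d := by
      have h : (2 * s + 1) * d = (2 ^ (k + 1) + 1) * d := by rw [← hs, pow_succ]; ring
      rw [h]; exact hmax
    have h2st : 2 * (s : ℤ) + t ≤ s * t + 2 := by
      have hs1' : (1 : ℤ) ≤ s := by exact_mod_cast hs1
      have ht2' : (2 : ℤ) ≤ t := by exact_mod_cast ht2
      nlinarith [mul_nonneg (sub_nonneg.mpr hs1') (sub_nonneg.mpr ht2')]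
    rw [ht]
    have hapos : 0 < a := by omega
    have key : a * ((t + 1) * d) ≤ a * b := by
      calc a * ((t + 1) * d) ≤ (4 * d - 1) * ((2 ^ p + 1) * d + d - 1) := ?_
        _ ≤ a * b := hab
      rw [← hst]
      have h1 : 1 ≤ 4 * d := by omega
      have h2 : 1 ≤ (s * t + 1) * d + d := by nlinarith
      zify [h1, h2]
      have hd' : (1 : ℤ) ≤ d := by exact_mod_cast hd
      have ht2' : (2 : ℤ) ≤ t := by exact_mod_cast ht2
      have ha'' : (a : ℤ) + 1 ≤ (2 * s + 1) * d := by exact_mod_cast ha'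
      have step1 : (a : ℤ) * ((t + 1) * d) ≤ ((2 * s + 1) * d - 1) * ((t + 1) * d) := by
        have : (0 : ℤ) ≤ (t + 1) * d := by positivity
        nlinarith
      have step2 : ((2 * (s:ℤ) + 1) * d - 1) * ((t + 1) * d)
          ≤ (4 * d - 1) * (((s:ℤ) * t + 1) * d + d - 1) := by
        nlinarith [mul_nonneg (mul_nonneg (mul_nonneg (Int.ofNat_nonneg s) (Int.ofNat_nonneg t))
            (Int.ofNat_nonneg d)) (sub_nonneg.mpr hd'),
          mul_nonneg (Int.ofNat_nonneg d) (sub_nonneg.mpr hd'),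
          mul_nonneg (sub_nonneg.mpr h2st)
            (mul_nonneg (Int.ofNat_nonneg d) (Int.ofNat_nonneg d)),
          mul_nonneg (Int.ofNat_nonneg t) (Int.ofNat_nonneg d)]
      calc (a : ℤ) * ((t + 1) * d) ≤ _ := step1
        _ ≤ _ := step2
    exact Nat.le_of_mul_le_mul_left key hapos
end
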